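/- Let M ∈ ℂⁿˣⁿ be Hermitian positive semidefinite with eigenvalues λ₁ ≥ … ≥ λₙ and λ_k > 0. For every B ∈ ℂⁿˣᵏ with orthonormal columns such that Bᴴ M B is invertible, tr((Bᴴ M B)⁻¹) ≥ Σᵢ₌₁ᵏ 1/λᵢ, with equality when the columns of B are orthonormal eigenvectors of M associated with the k largest eigenvalues. -/

import Mathlib

open Matrix ComplexOrder

lemma dot_star_self {α : Type*} [Fintype α] (v : α → ℂ) :
    star v ⬝ᵥ v = ((∑ p, Complex.normSq (v p) : ℝ) : ℂ) := by
  push_cast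
  simp only [dotProduct, Pi.star_apply, RCLike.star_def]
  refine Finset.sum_congr rfl fun p _ => ?_
  rw [mul_comm, Complex.mul_conj]

lemma quad_diag {α : Type*} [Fintype α] [DecidableEq α] (r : α → ℝ) (v : α → ℂ) :
    star v ⬝ᵥ ((Matrix.diagonal fun p => (r p : ℂ)) *ᵥ v)
      = ((∑ p, r p * Complex.normSq (v p) : ℝ) : ℂ) := by
  push_cast
  simp only [dotProduct, mulVec_diagonal, Pi.star_apply, RCLike.star_def]
  refine Finset.sum_congr rfl fun p _ => ?_
  rw [← Complex.mul_conj]; ring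

lemma conj_quad {n k : ℕ} (C : Matrix (Fin n) (Fin k) ℂ) (P : Matrix (Fin n) (Fin n) ℂ)
    (y : Fin k → ℂ) :
    star (C *ᵥ y) ⬝ᵥ (P *ᵥ (C *ᵥ y)) = star y ⬝ᵥ ((Cᴴ * P * C) *ᵥ y) := by
  rw [star_mulVec, ← mulVec_mulVec, dotProduct_mulVec, vecMul_vecMul, ← dotProduct_mulVec,
    mulVec_mulVec, Matrix.mul_assoc]

lemma conj_dot {n k : ℕ} (C : Matrix (Fin n) (Fin k) ℂ) (y : Fin k → ℂ) :
    star (C *ᵥ y) ⬝ᵥ (C *ᵥ y) = star y ⬝ᵥ ((Cᴴ * C) *ᵥ y) := by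
  have := conj_quad C 1 y
  simpa [Matrix.mul_one] using this

lemma eig_le {n k : ℕ} (hk : k ≤ n) (lam : Fin n → ℝ) (nu : Fin k → ℝ)
    (C : Matrix (Fin n) (Fin k) ℂ) (hC : Cᴴ * C = 1)
    (hD : Cᴴ * Matrix.diagonal (fun j => (lam j : ℂ)) * C = Matrix.diagonal (fun j => (nu j : ℂ)))
    (e : Fin n ≃ Fin n) (σ : Fin k ≃ Fin k)
    (hlam : Antitone (fun p => lam (e p))) (hnu : Antitone (fun q => nu (σ q)))
    (i : Fin k) : nu (σ i) ≤ lam (e ⟨i.val, i.isLt.trans_le hk⟩) := by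
  have hmk : i.val < k := i.isLt
  have hmn : i.val < n := hmk.trans_le hk
  set m := i.val with hm
  let emb1 : Fin (m+1) → Fin k := fun j => ⟨j.val, by omega⟩
  let emb2 : Fin m → Fin n := fun t => ⟨t.val, by omega⟩
  let C' : Matrix (Fin k) (Fin (m+1)) ℂ := fun p j => if p = σ (emb1 j) then 1 else 0
  let E : Matrix (Fin m) (Fin n) ℂ := fun t q => if q = e (emb2 t) then 1 else 0
  obtain ⟨c, hc0, hFc⟩ : ∃ c : Fin (m+1) → ℂ, c ≠ 0 ∧ (E * C * C').mulVecLin c = 0 := by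
    by_contra h
    push_neg at h
    have hinj : Function.Injective ((E * C * C').mulVecLin) := fun a b hab => by
      by_contra hne
      exact h (a - b) (sub_ne_zero.mpr hne) (by rw [map_sub, hab, sub_self])
    have := LinearMap.finrank_le_finrank_of_injective hinj
    simp [Module.finrank_fin_fun] at this
  set y : Fin k → ℂ := C' *ᵥ c with hy
  set x : Fin n → ℂ := C *ᵥ y with hx
  have hyval : ∀ j : Fin (m+1), y (σ (emb1 j)) = c j := by
    intro j
    show (∑ b, (if σ (emb1 j) = σ (emb1 b) then (1:ℂ) else 0) * c b) = c j
    rw [Finset.sum_eq_single j]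
    · simp
    · intro b _ hb
      have hne : σ (emb1 j) ≠ σ (emb1 b) := by
        refine σ.injective.ne fun hh => hb ?_
        exact Fin.ext (congrArg Fin.val hh).symm
      simp [hne]
    · simp
  have hysupp : ∀ p, (∀ j, p ≠ σ (emb1 j)) → y p = 0 := by
    intro p hp
    show (∑ b, (if p = σ (emb1 b) then (1:ℂ) else 0) * c b) = 0
    exact Finset.sum_eq_zero fun b _ => by simp [hp b]
  have hEx : E *ᵥ x = 0 := by
    have : (E * C * C') *ᵥ c = 0 := hFc
    rw [← mulVec_mulVec, ← mulVec_mulVec] at this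
    exact this
  have hxzero : ∀ q : Fin n, (e.symm q).val < m → x q = 0 := by
    intro q hq
    have h0 : (E *ᵥ x) ⟨(e.symm q).val, hq⟩ = 0 := by rw [hEx]; rfl
    have hqe : e (emb2 ⟨(e.symm q).val, hq⟩) = q := by
      have : emb2 ⟨(e.symm q).val, hq⟩ = e.symm q := rfl
      rw [this, Equiv.apply_symm_apply]
    have : (∑ p, (if p = e (emb2 ⟨(e.symm q).val, hq⟩) then (1:ℂ) else 0) * x p) = 0 := h0
    rw [Finset.sum_eq_single q] at this
    · simpa [hqe] using this
    · intro b _ hb; simp [hqe, hb]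
    · simp
  -- norms equal
  have hNxy : (∑ q, Complex.normSq (x q)) = (∑ p, Complex.normSq (y p)) := by
    have h := conj_dot C y
    rw [hC, Matrix.one_mulVec, dot_star_self, dot_star_self] at h
    exact_mod_cast h
  -- quadratic forms equal
  have hquad : (∑ q, lam q * Complex.normSq (x q)) = (∑ p, nu p * Complex.normSq (y p)) := by
    have h := conj_quad C (Matrix.diagonal fun j => (lam j : ℂ)) y
    rw [hD, quad_diag, quad_diag] at h
    exact_mod_cast h
  have hNy : 0 < ∑ p, Complex.normSq (y p) := by
    obtain ⟨j, hj⟩ := Function.ne_iff.mp hc0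
    refine Finset.sum_pos' (fun p _ => Complex.normSq_nonneg _) ⟨σ (emb1 j), Finset.mem_univ _, ?_⟩
    rw [hyval j]
    exact Complex.normSq_pos.mpr hj
  have h1 : nu (σ i) * (∑ p, Complex.normSq (y p)) ≤ ∑ p, nu p * Complex.normSq (y p) := by
    rw [Finset.mul_sum]
    refine Finset.sum_le_sum fun p _ => ?_
    by_cases hp : y p = 0
    · simp [hp]
    · have : ∃ j, p = σ (emb1 j) := by
        by_contra hno; push_neg at hno; exact hp (hysupp p hno)
      obtain ⟨j, rfl⟩ := this
      have hle : (emb1 j : Fin k) ≤ i := by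
        have := j.isLt
        exact Fin.mk_le_of_le_val (by omega)
      exact mul_le_mul_of_nonneg_right (hnu hle) (Complex.normSq_nonneg _)
  have h2 : (∑ q, lam q * Complex.normSq (x q))
      ≤ lam (e ⟨m, hmn⟩) * ∑ q, Complex.normSq (x q) := by
    rw [Finset.mul_sum]
    refine Finset.sum_le_sum fun q _ => ?_
    by_cases hq : (e.symm q).val < m
    · simp [hxzero q hq]
    · have hle : (⟨m, hmn⟩ : Fin n) ≤ e.symm q := by
        rw [Fin.le_def]
        simpa using not_lt.mp hq
      have h3 := hlam hle
      simp only [Equiv.apply_symm_apply] at h3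
      exact mul_le_mul_of_nonneg_right h3 (Complex.normSq_nonneg _)
  have key : nu (σ i) * (∑ p, Complex.normSq (y p))
      ≤ lam (e ⟨m, hmn⟩) * (∑ p, Complex.normSq (y p)) := by
    calc nu (σ i) * (∑ p, Complex.normSq (y p)) ≤ ∑ p, nu p * Complex.normSq (y p) := h1
    _ = ∑ q, lam q * Complex.normSq (x q) := hquad.symm
    _ ≤ lam (e ⟨m, hmn⟩) * ∑ q, Complex.normSq (x q) := h2
    _ = _ := by rw [hNxy]
  exact (mul_le_mul_iff_left₀ hNy).mp key

/-- For M Hermitian PSD with decreasingly ordered eigenvalues μ and μ_k > 0, and B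
semi-unitary with Bᴴ M B invertible, tr((Bᴴ M B)⁻¹) ≥ Σᵢ₌₁ᵏ 1/μᵢ, with equality when the
columns of B are orthonormal eigenvectors of M for the k largest eigenvalues. -/
theorem stmt_8 {n k : ℕ} (hk : k ≤ n) (hk0 : 0 < k) (M : Matrix (Fin n) (Fin n) ℂ)
    (hM : M.PosSemidef)
    (μ : Fin n → ℝ) (hμa : Antitone μ)
    (hμ : ∃ e : Fin n ≃ Fin n, ∀ i, μ i = hM.1.eigenvalues (e i))
    (hμk : 0 < μ ⟨k - 1, by omega⟩)
    (B : Matrix (Fin n) (Fin k) ℂ) (hB : Bᴴ * B = 1)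
    (hinv : IsUnit (Bᴴ * M * B)) :
    (∑ i : Fin k, 1 / μ ⟨i.val, by omega⟩) ≤ (Matrix.trace ((Bᴴ * M * B)⁻¹)).re ∧
    ((∀ i : Fin k, M *ᵥ (fun j => B j i) = μ ⟨i.val, by omega⟩ • (fun j => B j i)) →
      (Matrix.trace ((Bᴴ * M * B)⁻¹)).re = ∑ i : Fin k, 1 / μ ⟨i.val, by omega⟩) := by
  obtain ⟨e, he⟩ := hμ
  set lam : Fin n → ℝ := hM.1.eigenvalues with hlamdef
  set A := Bᴴ * M * B with hAdef
  have hApsd : A.PosSemidef := hM.conjTranspose_mul_mul_same B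
  have hA : A.IsHermitian := hApsd.1
  set ν : Fin k → ℝ := hA.eigenvalues with hνdef
  set W := (hA.eigenvectorUnitary : Matrix (Fin k) (Fin k) ℂ) with hWdef
  have hW1 : Wᴴ * W = 1 := by
    rw [hWdef, ← Matrix.star_eq_conjTranspose]
    exact Matrix.mem_unitaryGroup_iff'.mp hA.eigenvectorUnitary.2
  have hW2 : W * Wᴴ = 1 := by
    rw [hWdef, ← Matrix.star_eq_conjTranspose]
    exact Matrix.mem_unitaryGroup_iff.mp hA.eigenvectorUnitary.2
  have hdiagA : Wᴴ * A * W = Matrix.diagonal (fun j => (ν j : ℂ)) := by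
    rw [hWdef, ← Matrix.star_eq_conjTranspose]
    simpa [Function.comp_def] using hA.conjStarAlgAut_star_eigenvectorUnitary
  -- positivity of ν
  have hν0 : ∀ j, 0 < ν j := by
    intro j
    rcases (hApsd.eigenvalues_nonneg j).lt_or_eq with h | h
    · exact h
    · exfalso
      have hdet : A.det ≠ 0 := by
        have := (Matrix.isUnit_iff_isUnit_det A).mp hinv
        exact this.ne_zero
      rw [hA.det_eq_prod_eigenvalues] at hdet
      exact hdet (Finset.prod_eq_zero (Finset.mem_univ j) (by rw [← h]; norm_num))
  -- trace formula for A⁻¹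
  have hAinv : A⁻¹ = W * Matrix.diagonal (fun j => ((ν j : ℂ))⁻¹) * Wᴴ := by
    apply Matrix.inv_eq_left_inv
    have hsp : A = W * Matrix.diagonal (fun j => (ν j : ℂ)) * Wᴴ := by
      rw [hWdef, ← Matrix.star_eq_conjTranspose]
      exact hA.spectral_theorem
    rw [hsp]
    simp only [Matrix.mul_assoc]
    rw [← Matrix.mul_assoc Wᴴ W, hW1, Matrix.one_mul,
      ← Matrix.mul_assoc (Matrix.diagonal fun j => ((ν j : ℂ))⁻¹),
      Matrix.diagonal_mul_diagonal]
    have : (fun j => ((ν j : ℂ))⁻¹ * (ν j : ℂ)) = fun _ => (1 : ℂ) := by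
      funext j
      exact inv_mul_cancel₀ (by exact_mod_cast (hν0 j).ne')
    rw [this, Matrix.diagonal_one, Matrix.one_mul, hW2]
  have htr : (Matrix.trace A⁻¹).re = ∑ j, (ν j)⁻¹ := by
    rw [hAinv, Matrix.trace_mul_cycle, hW1, Matrix.one_mul, Matrix.trace_diagonal]
    norm_cast
  -- the compression matrix in eigen-coordinates
  set V := (hM.1.eigenvectorUnitary : Matrix (Fin n) (Fin n) ℂ) with hVdef
  have hV1 : Vᴴ * V = 1 := by
    rw [hVdef, ← Matrix.star_eq_conjTranspose]
    exact Matrix.mem_unitaryGroup_iff'.mp hM.1.eigenvectorUnitary.2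
  have hV2 : V * Vᴴ = 1 := by
    rw [hVdef, ← Matrix.star_eq_conjTranspose]
    exact Matrix.mem_unitaryGroup_iff.mp hM.1.eigenvectorUnitary.2
  have hdiagM : Vᴴ * M * V = Matrix.diagonal (fun j => (lam j : ℂ)) := by
    rw [hVdef, ← Matrix.star_eq_conjTranspose]
    simpa [Function.comp_def] using hM.1.conjStarAlgAut_star_eigenvectorUnitary
  set C := Vᴴ * B * W with hCdef
  have hCH : Cᴴ = Wᴴ * (Bᴴ * V) := by
    rw [hCdef]
    simp [Matrix.conjTranspose_mul, Matrix.mul_assoc]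
  have hVV : ∀ Z : Matrix (Fin n) (Fin k) ℂ, V * (Vᴴ * Z) = Z := fun Z => by
    rw [← Matrix.mul_assoc, hV2, Matrix.one_mul]
  have hC : Cᴴ * C = 1 := by
    rw [hCH, hCdef]
    simp only [Matrix.mul_assoc]
    rw [hVV, ← Matrix.mul_assoc Bᴴ B, hB, Matrix.one_mul, hW1]
  have hD : Cᴴ * Matrix.diagonal (fun j => (lam j : ℂ)) * C
      = Matrix.diagonal (fun j => (ν j : ℂ)) := by
    rw [← hdiagM, hCH, hCdef]
    simp only [Matrix.mul_assoc]
    rw [hVV, hVV, ← hdiagA, hAdef]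
    simp only [Matrix.mul_assoc]
  -- sorting permutation for ν
  set σ : Fin k ≃ Fin k := Fin.revPerm.trans (Tuple.sort ν) with hσdef
  have hσa : Antitone (fun q => ν (σ q)) := by
    intro a b hab
    exact Tuple.monotone_sort ν (Fin.rev_le_rev.mpr hab)
  have hμe : Antitone (fun p => lam (e p)) := by
    have heq : μ = fun p => lam (e p) := funext he
    rw [heq] at hμa
    exact hμa
  have hle : ∀ i : Fin k, ν (σ i) ≤ μ ⟨i.val, by omega⟩ := by
    intro i
    have h := eig_le hk lam ν C hC hD e σ hμe hσa i
    rwa [← he ⟨i.val, by omega⟩] at h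
  constructor
  · -- the inequality
    rw [htr, ← Equiv.sum_comp σ (fun j => (ν j)⁻¹)]
    refine Finset.sum_le_sum fun i _ => ?_
    rw [one_div]
    exact inv_anti₀ (hν0 (σ i)) (hle i)
  · -- the equality case
    intro hcol
    have hμpos : ∀ i : Fin k, 0 < μ ⟨i.val, by omega⟩ := by
      intro i
      refine lt_of_lt_of_le hμk (hμa ?_)
      rw [Fin.le_def]
      simp
      omega
    have hMB : M * B
        = B * Matrix.diagonal (fun j : Fin k => (μ ⟨j.val, by omega⟩ : ℂ)) := by
      ext p j
      have h1 : (M * B) p j = (M *ᵥ fun r => B r j) p := by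
        simp [Matrix.mul_apply, Matrix.mulVec, dotProduct]
      rw [Matrix.mul_diagonal, h1, hcol j]
      simp [Complex.real_smul]
      ring
    have hAdiag : A = Matrix.diagonal (fun j : Fin k => (μ ⟨j.val, by omega⟩ : ℂ)) := by
      rw [hAdef, Matrix.mul_assoc, hMB, ← Matrix.mul_assoc, hB, Matrix.one_mul]
    have hAinv2 : A⁻¹
        = Matrix.diagonal (fun j : Fin k => ((μ ⟨j.val, by omega⟩ : ℂ))⁻¹) := by
      apply Matrix.inv_eq_left_inv
      rw [hAdiag, Matrix.diagonal_mul_diagonal]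
      have : (fun j : Fin k => ((μ ⟨j.val, by omega⟩ : ℂ))⁻¹ * (μ ⟨j.val, by omega⟩ : ℂ))
          = fun _ => (1 : ℂ) := by
        funext j
        exact inv_mul_cancel₀ (by exact_mod_cast (hμpos j).ne')
      rw [this, Matrix.diagonal_one]
    rw [hAinv2, Matrix.trace_diagonal]
    norm_cast
    exact Finset.sum_congr rfl fun i _ => (one_div _).symm
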